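/- Let R be a Noetherian unique factorization domain, let f : M → N be an injective R-linear map between finitely generated free R-modules, and let ξ ∈ N. Then the ideal I(ξ) = {a ∈ R : a·ξ ∈ range(f)} of R is a principal ideal. -/

import Mathlib

/-- Let `R` be a Noetherian UFD, `f : M → N` an injective
`R`-linear map between finitely generated free `R`-modules, and `ξ ∈ N`.
Then the ideal `I(ξ) = {a ∈ R : a • ξ ∈ range f}` of `R` is principal.
(Here `I(ξ)` is realized as the preimage of `range f` under the linear map
`R → N`, `a ↦ a • ξ`.) -/
theorem annihilator_ideal_isPrincipal
    {R M N : Type*} [CommRing R] [IsDomain R] [IsNoetherianRing R]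
    [UniqueFactorizationMonoid R]
    [AddCommGroup M] [Module R M] [Module.Free R M] [Module.Finite R M]
    [AddCommGroup N] [Module R N] [Module.Free R N] [Module.Finite R N]
    (f : M →ₗ[R] N) (hf : Function.Injective f) (ξ : N) :
    (Submodule.comap (LinearMap.toSpanSingleton R N ξ) (LinearMap.range f)).IsPrincipal := by
  classical
  letI : StrongNormalizationMonoid R := UniqueFactorizationMonoid.normalizationMonoid
  letI : StrongNormalizedGCDMonoid R := UniqueFactorizationMonoid.toStrongNormalizedGCDMonoid R
  set I : Ideal R := Submodule.comap (LinearMap.toSpanSingleton R N ξ) (LinearMap.range f) with hIdef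
  by_cases hbot : I = ⊥
  · rw [hbot]; exact ⟨⟨0, (Ideal.span_zero).symm⟩⟩
  obtain ⟨a0, ha0I, ha0⟩ := (Submodule.ne_bot_iff I).mp hbot
  have hmemI : ∀ a : R, a ∈ I ↔ a • ξ ∈ LinearMap.range f := fun a => Iff.rfl
  obtain ⟨m0, hm0⟩ := (hmemI a0).mp ha0I
  -- characterization via m0
  have key : ∀ a : R, a ∈ I ↔ ∃ m, a • m0 = a0 • m := by
    intro a
    rw [hmemI]
    constructor
    · rintro ⟨m, hm⟩
      refine ⟨m, hf ?_⟩
      rw [map_smul, map_smul, hm0, hm, smul_smul, smul_smul, mul_comm]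
    · rintro ⟨m, hm⟩
      refine ⟨m, ?_⟩
      have h1 : a0 • f m = a0 • (a • ξ) := by
        rw [← map_smul, ← hm, map_smul, hm0, smul_smul, smul_smul, mul_comm]
      exact smul_right_injective N ha0 h1
  -- basis of M
  let ι := Module.Free.ChooseBasisIndex R M
  let b : Module.Basis ι R M := Module.Free.chooseBasis R M
  let c : ι → R := fun i => b.repr m0 i
  set c0 : R := Finset.univ.gcd c with hc0
  have key2 : ∀ a : R, (∃ m, a • m0 = a0 • m) ↔ a0 ∣ a * c0 := by
    intro a
    constructor
    · rintro ⟨m, hm⟩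
      have hco : ∀ i, a * c i = a0 * b.repr m i := by
        intro i
        have := congrArg (fun x => b.repr x i) hm
        simpa [c, Finsupp.smul_apply, smul_eq_mul] using this
      have h1 : a0 ∣ Finset.univ.gcd (fun i => a * c i) := by
        apply Finset.dvd_gcd
        intro i _
        exact ⟨b.repr m i, hco i⟩
      rw [Finset.gcd_mul_left] at h1
      rw [hc0]
      exact h1.trans ((Associated.mul_right (normalize_associated a) _).dvd)
    · intro h
      have hdvd : ∀ i, a0 ∣ a * c i := by
        intro i
        exact h.trans (mul_dvd_mul_left a (Finset.gcd_dvd (Finset.mem_univ i)))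
      choose e he using hdvd
      refine ⟨∑ i, e i • b i, ?_⟩
      have : a • m0 = a • ∑ i, c i • b i := by rw [b.sum_repr m0]
      rw [this, Finset.smul_sum, Finset.smul_sum]
      congr 1
      ext i
      rw [smul_smul, smul_smul, ← he i]
  -- now I = {a : a0 ∣ a * c0}; show principal with generator a0 / gcd a0 c0
  set g : R := gcd a0 c0 with hg
  have hga : g ∣ a0 := gcd_dvd_left _ _
  have hgc : g ∣ c0 := gcd_dvd_right _ _
  obtain ⟨B, hB⟩ := hga
  obtain ⟨d, hd⟩ := hgc
  have hgne : g ≠ 0 := fun h => ha0 (by rw [hB, h, zero_mul])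
  -- gcd B d is a unit
  have hunit : IsUnit (gcd B d) := by
    have h1 : gcd (g * B) (g * d) = normalize g * gcd B d := gcd_mul_left g B d
    rw [← hB, ← hd, ← hg] at h1
    -- g = normalize g * gcd B d
    have h2 : Associated g (normalize g * gcd B d) := h1 ▸ Associated.refl _
    have h3 : Associated (normalize g) (normalize g * gcd B d) :=
      (normalize_associated g).trans h2
    obtain ⟨u, hu⟩ := h3
    have hne : normalize g ≠ 0 := by simpa [normalize_eq_zero] using hgne
    have : (u : R) = gcd B d := mul_left_cancel₀ hne hu
    exact this ▸ u.isUnit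
  have hIa : ∀ a : R, a ∈ I ↔ a0 ∣ a * c0 := fun a => (key a).trans (key2 a)
  refine ⟨⟨B, ?_⟩⟩
  ext a
  rw [hIa a, Submodule.mem_span_singleton]
  constructor
  · rintro ⟨k, hk⟩
    -- a * c0 = a0 * k ; a0 = g * B, c0 = g * d
    have h1 : g * (a * d) = g * (B * k) := by
      rw [hd, hB] at hk
      linear_combination hk
    have h2 : B ∣ a * d := ⟨k, mul_left_cancel₀ hgne h1⟩
    have h3 : B ∣ gcd (a * B) (a * d) := dvd_gcd (dvd_mul_left B a) h2
    rw [gcd_mul_left] at h3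
    have h4 : Associated (normalize a * gcd B d) a :=
      (associated_mul_unit_left (normalize a) _ hunit).trans (normalize_associated a)
    obtain ⟨k', hk'⟩ := h3.trans h4.dvd
    exact ⟨k', by rw [smul_eq_mul, mul_comm, ← hk']⟩
  · rintro ⟨k, hk⟩
    refine ⟨k * d, ?_⟩
    rw [← hk, smul_eq_mul, hB, hd]; ring
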